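/- Let a < b be real numbers, let V : [a,b] → ℝ be bounded and measurable, and let ψ, φ : ℝ → ℂ be twice continuously differentiable on [a,b]. Define G₊ψ := (1/√2)·(ψ(a) − i ψ'(a), ψ(b) + i ψ'(b)) ∈ ℂ² and G₋ψ := (1/√2)·(ψ(a) + i ψ'(a), ψ(b) − i ψ'(b)) ∈ ℂ², and similarly for φ. Then ∫_a^b (−i)(−ψ''(x) + V(x)ψ(x)) · conj(φ(x)) dx + ∫_a^b ψ(x) · conj((−i)(−φ''(x) + V(x)φ(x))) dx = ⟨G₊ψ, G₊φ⟩_{ℂ²} − ⟨G₋ψ, G₋φ⟩_{ℂ²}, where ⟨u, v⟩_{ℂ²} = u₁·conj(v₁) + u₂·conj(v₂). -/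

import Mathlib

open Complex

open MeasureTheory in
lemma aux_int (a b : ℝ) (hab : a ≤ b) (V : ℝ → ℝ) (hV : Measurable V)
    (C : ℝ) (hC : ∀ x ∈ Set.Icc a b, |V x| ≤ C)
    (f : ℝ → ℂ) (hf : ContinuousOn f (Set.Icc a b)) :
    IntervalIntegrable (fun x => (V x : ℂ) * f x) volume a b := by
  rw [intervalIntegrable_iff_integrableOn_Icc_of_le hab]
  obtain ⟨D, hD⟩ := (isCompact_Icc (a := a) (b := b)).exists_bound_of_continuousOn hf
  have hmeas : AEStronglyMeasurable (fun x => (V x : ℂ) * f x)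
      (volume.restrict (Set.Icc a b)) :=
    ((Complex.measurable_ofReal.comp hV).aestronglyMeasurable).mul
      (hf.aestronglyMeasurable measurableSet_Icc)
  apply Integrable.mono' (g := fun _ => |C| * |D|)
    (integrableOn_const (by simp [measure_lt_top]) enorm_ne_top) hmeas
  filter_upwards [ae_restrict_mem measurableSet_Icc] with x hx
  have h1 : ‖(V x : ℂ)‖ ≤ |C| := by
    simpa using (hC x hx).trans (le_abs_self C)
  have h2 : ‖f x‖ ≤ |D| := (hD x hx).trans (le_abs_self D)
  calc ‖(V x : ℂ) * f x‖ = ‖(V x : ℂ)‖ * ‖f x‖ := norm_mul _ _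
    _ ≤ |C| * |D| := mul_le_mul h1 h2 (norm_nonneg _) (abs_nonneg C)

/-- Let `a < b`, let `V : [a,b] → ℝ` be bounded and measurable, and let
`ψ, φ : ℝ → ℂ` be twice continuously differentiable on `[a,b]` (with first derivatives
`ψ', φ'` and continuous second derivatives `ψ'', φ''`). With
`G₊ψ = (1/√2)·(ψ(a) − i ψ'(a), ψ(b) + i ψ'(b))` and
`G₋ψ = (1/√2)·(ψ(a) + i ψ'(a), ψ(b) − i ψ'(b))`, one has
`∫_a^b (−i)(−ψ'' + Vψ) conj(φ) + ∫_a^b ψ conj((−i)(−φ'' + Vφ))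
  = ⟨G₊ψ, G₊φ⟩_{ℂ²} − ⟨G₋ψ, G₋φ⟩_{ℂ²}`,
where `⟨u, v⟩_{ℂ²} = u₁ conj(v₁) + u₂ conj(v₂)`. -/
theorem stmt_9
    (a b : ℝ) (hab : a < b)
    (V : ℝ → ℝ) (hVmeas : Measurable V)
    (hVbdd : ∃ C : ℝ, ∀ x ∈ Set.Icc a b, |V x| ≤ C)
    (ψ ψ' ψ'' φ φ' φ'' : ℝ → ℂ)
    (hψ : ∀ x ∈ Set.Icc a b, HasDerivAt ψ (ψ' x) x)
    (hψ' : ∀ x ∈ Set.Icc a b, HasDerivAt ψ' (ψ'' x) x)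
    (hψ'' : ContinuousOn ψ'' (Set.Icc a b))
    (hφ : ∀ x ∈ Set.Icc a b, HasDerivAt φ (φ' x) x)
    (hφ' : ∀ x ∈ Set.Icc a b, HasDerivAt φ' (φ'' x) x)
    (hφ'' : ContinuousOn φ'' (Set.Icc a b)) :
    (∫ x in a..b, (-Complex.I) * (-(ψ'' x) + (V x : ℂ) * ψ x) * (starRingEnd ℂ) (φ x)) +
      (∫ x in a..b, ψ x * (starRingEnd ℂ) ((-Complex.I) * (-(φ'' x) + (V x : ℂ) * φ x))) =
    (((1 / (Real.sqrt 2 : ℂ)) * (ψ a - Complex.I * ψ' a)) *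
        (starRingEnd ℂ) ((1 / (Real.sqrt 2 : ℂ)) * (φ a - Complex.I * φ' a)) +
      ((1 / (Real.sqrt 2 : ℂ)) * (ψ b + Complex.I * ψ' b)) *
        (starRingEnd ℂ) ((1 / (Real.sqrt 2 : ℂ)) * (φ b + Complex.I * φ' b))) -
    (((1 / (Real.sqrt 2 : ℂ)) * (ψ a + Complex.I * ψ' a)) *
        (starRingEnd ℂ) ((1 / (Real.sqrt 2 : ℂ)) * (φ a + Complex.I * φ' a)) +
      ((1 / (Real.sqrt 2 : ℂ)) * (ψ b - Complex.I * ψ' b)) *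
        (starRingEnd ℂ) ((1 / (Real.sqrt 2 : ℂ)) * (φ b - Complex.I * φ' b))) := by
  have hab' : a ≤ b := hab.le
  obtain ⟨C, hC⟩ := hVbdd
  have huIcc : Set.uIcc a b = Set.Icc a b := Set.uIcc_of_le hab'
  have hψc : ContinuousOn ψ (Set.Icc a b) :=
    fun x hx => (hψ x hx).continuousAt.continuousWithinAt
  have hψ'c : ContinuousOn ψ' (Set.Icc a b) :=
    fun x hx => (hψ' x hx).continuousAt.continuousWithinAt
  have hφc : ContinuousOn φ (Set.Icc a b) :=
    fun x hx => (hφ x hx).continuousAt.continuousWithinAt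
  have hφ'c : ContinuousOn φ' (Set.Icc a b) :=
    fun x hx => (hφ' x hx).continuousAt.continuousWithinAt
  have hconj : ∀ g : ℝ → ℂ, ContinuousOn g (Set.Icc a b) →
      ContinuousOn (fun x => (starRingEnd ℂ) (g x)) (Set.Icc a b) :=
    fun g hg => Complex.continuous_conj.comp_continuousOn hg
  -- combined integrand
  set h : ℝ → ℂ := fun x => Complex.I * (ψ'' x * (starRingEnd ℂ) (φ x) -
    ψ x * (starRingEnd ℂ) (φ'' x)) with hh
  have hhc : ContinuousOn h (Set.Icc a b) :=
    continuousOn_const.mul ((hψ''.mul (hconj φ hφc)).sub (hψc.mul (hconj φ'' hφ'')))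
  have hhint : IntervalIntegrable h MeasureTheory.volume a b :=
    hhc.intervalIntegrable_of_Icc hab'
  -- FTC
  have hF : ∀ x ∈ Set.uIcc a b,
      HasDerivAt (fun y => Complex.I * (ψ' y * (starRingEnd ℂ) (φ y) -
        ψ y * (starRingEnd ℂ) (φ' y))) (h x) x := by
    intro x hx
    rw [huIcc] at hx
    have d1 : HasDerivAt (fun y => (starRingEnd ℂ) (φ y)) ((starRingEnd ℂ) (φ' x)) x :=
      (hφ x hx).star
    have d2 : HasDerivAt (fun y => (starRingEnd ℂ) (φ' y)) ((starRingEnd ℂ) (φ'' x)) x :=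
      (hφ' x hx).star
    have := (((hψ' x hx).mul d1).sub ((hψ x hx).mul d2)).const_mul Complex.I
    convert this using 1
    · rfl
    · rfl
    change Complex.I * (ψ'' x * (starRingEnd ℂ) (φ x) - ψ x * (starRingEnd ℂ) (φ'' x)) = _
    ring
  have key := intervalIntegral.integral_eq_sub_of_hasDerivAt hF hhint
  -- integrability of the two original integrands
  have hint1 : IntervalIntegrable
      (fun x => (-Complex.I) * (-(ψ'' x) + (V x : ℂ) * ψ x) * (starRingEnd ℂ) (φ x))
      MeasureTheory.volume a b := by
    have e : (fun x => (-Complex.I) * (-(ψ'' x) + (V x : ℂ) * ψ x) * (starRingEnd ℂ) (φ x))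
        = fun x => (Complex.I * (ψ'' x * (starRingEnd ℂ) (φ x))) +
          (-Complex.I) * ((V x : ℂ) * (ψ x * (starRingEnd ℂ) (φ x))) := by
      funext x; ring
    rw [e]
    exact ((continuousOn_const.mul (hψ''.mul (hconj φ hφc))).intervalIntegrable_of_Icc hab').add
      ((aux_int a b hab' V hVmeas C hC _ (hψc.mul (hconj φ hφc))).const_mul _)
  have hint2 : IntervalIntegrable
      (fun x => ψ x * (starRingEnd ℂ) ((-Complex.I) * (-(φ'' x) + (V x : ℂ) * φ x)))
      MeasureTheory.volume a b := by
    have e : (fun x => ψ x * (starRingEnd ℂ) ((-Complex.I) * (-(φ'' x) + (V x : ℂ) * φ x)))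
        = fun x => (-Complex.I) * (ψ x * (starRingEnd ℂ) (φ'' x)) +
          Complex.I * ((V x : ℂ) * (ψ x * (starRingEnd ℂ) (φ x))) := by
      funext x
      simp only [map_mul, map_add, map_neg, Complex.conj_I, Complex.conj_ofReal]
      ring
    rw [e]
    exact ((continuousOn_const.mul (hψc.mul (hconj φ'' hφ''))).intervalIntegrable_of_Icc hab').add
      ((aux_int a b hab' V hVmeas C hC _ (hψc.mul (hconj φ hφc))).const_mul _)
  rw [← intervalIntegral.integral_add hint1 hint2]
  have e2 : ∀ x : ℝ,
      (-Complex.I) * (-(ψ'' x) + (V x : ℂ) * ψ x) * (starRingEnd ℂ) (φ x) +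
        ψ x * (starRingEnd ℂ) ((-Complex.I) * (-(φ'' x) + (V x : ℂ) * φ x)) = h x := by
    intro x
    simp only [hh, map_mul, map_add, map_neg, Complex.conj_I, Complex.conj_ofReal]
    ring
  rw [intervalIntegral.integral_congr (fun x _ => e2 x), key]
  -- final algebra
  have hs : ((Real.sqrt 2 : ℝ) : ℂ) * ((Real.sqrt 2 : ℝ) : ℂ) = 2 := by
    rw [← Complex.ofReal_mul, Real.mul_self_sqrt (by norm_num)]
    norm_num
  have hs0 : ((Real.sqrt 2 : ℝ) : ℂ) ≠ 0 := by
    intro h0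
    have := Real.sqrt_pos.2 (by norm_num : (0:ℝ) < 2)
    exact this.ne' (by exact_mod_cast h0)
  simp only [map_mul, map_add, map_sub, map_one, map_div₀, Complex.conj_I, Complex.conj_ofReal]
  field_simp
  linear_combination (Complex.I * (ψ' b * (starRingEnd ℂ) (φ b)) -
    Complex.I * (ψ b * (starRingEnd ℂ) (φ' b)) - Complex.I * (ψ' a * (starRingEnd ℂ) (φ a)) +
    Complex.I * (ψ a * (starRingEnd ℂ) (φ' a))) * hs
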